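/- Let (Ω, μ, τ) be an ergodic probability preserving transformation and φ : Ω → 𝔾 measurable (𝔾 = ℤ or ℝ). Suppose φ = ξ − g + g∘τ + ψ where ξ ∈ 𝔾, g : Ω → 𝔾 measurable, and ψ : Ω → K for a closed subgroup K ≤ 𝔾. If ψ is aperiodic (for every nontrivial character χ of 𝔾 and every λ ∈ 𝕊¹, λ·χ(ψ) is not a multiplicative τ-coboundary), and if the closure of ℤξ + K equals 𝔾, then φ is non-arithmetic: for every nontrivial character χ of 𝔾, χ(φ) is not a multiplicative τ-coboundary. -/

import Mathlib

open MeasureTheory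

noncomputable instance : MeasurableSpace Circle := borel Circle
instance : BorelSpace Circle := ⟨rfl⟩

/-- `h : Ω → 𝕊¹` is a multiplicative `τ`-coboundary (mod `μ`) if
`h = F/(F∘τ)` a.e. for some measurable `F : Ω → 𝕊¹`. -/
def IsMultCoboundary {Ω : Type*} [MeasurableSpace Ω] (μ : Measure Ω)
    (τ : Ω → Ω) (h : Ω → Circle) : Prop :=
  ∃ F : Ω → Circle, Measurable F ∧ ∀ᵐ ω ∂μ, h ω = F ω / F (τ ω)

/-- Cocycle reduction yields non-arithmeticity: if `φ = ξ − g + g∘τ + ψ` with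
`ψ` taking values in a closed subgroup `K`, `ψ` aperiodic, and `closure(ℤξ + K) = G`,
then `φ` is non-arithmetic: for no nontrivial (continuous) character `χ` of `G` is
`χ(φ)` a multiplicative `τ`-coboundary. -/
theorem nonarithmetic_of_reduction
    {Ω : Type*} [MeasurableSpace Ω] (μ : Measure Ω) [IsProbabilityMeasure μ]
    (τ : Ω → Ω) (hτ : MeasurePreserving τ μ μ) (herg : Ergodic τ μ)
    {G : Type*} [AddCommGroup G] [TopologicalSpace G] [IsTopologicalAddGroup G]
    [MeasurableSpace G] [BorelSpace G]
    (K : AddSubgroup G) (hK : IsClosed (K : Set G))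
    (φ ψ : Ω → G) (g : Ω → G) (ξ : G)
    (hφ : Measurable φ) (hψ : Measurable ψ) (hg : Measurable g)
    (hψK : ∀ ω, ψ ω ∈ K)
    (hred : ∀ ω, φ ω = ξ - g ω + g (τ ω) + ψ ω)
    (hdense : Dense {x : G | ∃ n : ℤ, ∃ k ∈ K, x = n • ξ + k})
    (haper : ∀ χ : AddChar G Circle, Continuous χ → χ ≠ 1 →
      ∀ lam : Circle, ¬ IsMultCoboundary μ τ (fun ω => lam * χ (ψ ω))) :
    ∀ χ : AddChar G Circle, Continuous χ → χ ≠ 1 →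
      ¬ IsMultCoboundary μ τ (fun ω => χ (φ ω)) := by
  intro χ hχc hχ1 ⟨F, hF, hFe⟩
  refine haper χ hχc hχ1 (χ ξ) ⟨fun ω => F ω * χ (g ω), hF.mul (hχc.measurable.comp hg), ?_⟩
  filter_upwards [hFe] with ω hω
  have h1 : χ (φ ω) = F ω / F (τ ω) := hω
  rw [hred ω] at h1
  simp only [AddChar.map_add_eq_mul, AddChar.map_sub_eq_div] at h1
  rw [mul_div_mul_comm, ← h1]
  simp [div_eq_mul_inv, mul_assoc, mul_comm, mul_left_comm]
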